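/- For every m×m matrix a with natural number entries such that every row sum and every column sum equals n (with n ≥ 1), there exists an m×m permutation matrix p such that p(i,j) ≤ a(i,j) for all i,j. -/

import Mathlib

/-- For every m×m matrix `a` with natural number entries such that every
row sum and every column sum equals `n` (with `n ≥ 1`), there exists a permutation
matrix `p` (the matrix of a permutation `σ` of `Fin m`) such that `p i j ≤ a i j`
for all `i, j`. -/
theorem birkhoff_von_neumann_step (m n : ℕ) (hn : 1 ≤ n) (a : Fin m → Fin m → ℕ)
    (hrow : ∀ i : Fin m, ∑ k : Fin m, a i k = n)
    (hcol : ∀ j : Fin m, ∑ k : Fin m, a k j = n) :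
    ∃ σ : Equiv.Perm (Fin m), ∀ i j : Fin m,
      (if σ i = j then 1 else 0) ≤ a i j := by
  set t : Fin m → Finset (Fin m) := fun i => Finset.univ.filter (fun j => 0 < a i j) with ht
  have hall : ∀ s : Finset (Fin m), s.card ≤ (s.biUnion t).card := by
    intro s
    set T := s.biUnion t
    have key : n * s.card ≤ n * T.card := by
      calc n * s.card = ∑ i ∈ s, n := by rw [Finset.sum_const, smul_eq_mul, mul_comm]
        _ = ∑ i ∈ s, ∑ j ∈ T, a i j := by
            refine Finset.sum_congr rfl fun i hi => ?_
            rw [← hrow i]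
            refine (Finset.sum_subset (Finset.subset_univ T) fun j _ hj => ?_).symm
            by_contra h
            exact hj (Finset.mem_biUnion.mpr ⟨i, hi, by simp [ht, Nat.pos_of_ne_zero h]⟩)
        _ = ∑ j ∈ T, ∑ i ∈ s, a i j := Finset.sum_comm
        _ ≤ ∑ j ∈ T, ∑ i : Fin m, a i j :=
            Finset.sum_le_sum fun j _ =>
              Finset.sum_le_sum_of_subset (Finset.subset_univ s)
        _ = ∑ j ∈ T, n := Finset.sum_congr rfl fun j _ => hcol j
        _ = n * T.card := by rw [Finset.sum_const, smul_eq_mul, mul_comm]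
    exact Nat.le_of_mul_le_mul_left key hn
  obtain ⟨f, hfinj, hf⟩ :=
    (Finset.all_card_le_biUnion_card_iff_existsInjective' t).mp hall
  refine ⟨Equiv.ofBijective f (Finite.injective_iff_bijective.mp hfinj), fun i j => ?_⟩
  by_cases h : f i = j
  · simp only [Equiv.ofBijective_apply, h, if_pos]
    have := hf i
    rw [h] at this
    exact (by simpa [ht] using this : 0 < a i j)
  · simp [Equiv.ofBijective_apply, h]
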